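/- arXiv:1802.06473 — 2 statements merged into one kernel-verified Lean document; each statement's English description precedes it below -/
import Mathlib

section
/- Let rooted binary trees with leaves labeled by pairs (d, z) ∈ ℤ³ × ℤ³ be defined inductively: a tree is either a leaf carrying a label (d, z), or a node with two rooted binary subtrees. Define D(leaf(d, z)) = d and D(node(s, t)) = D(s) + D(t), and define the rotational momentum recursively by ρ(leaf(d, z)) = d × z and ρ(node(s, t)) = (ρ(s) × ρ(t)) × (D(s) + D(t)). Then for any four such rooted binary trees t₁, t₂, t₃, t₄ satisfying the balancing condition D(t₁) + D(t₂) + D(t₃) + D(t₄) = 0, one has det(ρ(t₁), ρ(t₂), ρ(node(t₃, t₄))) = det(ρ(t₃), ρ(t₄), ρ(node(t₁, t₂))). In particular, the mixed h-product of rotational momenta along a rational trivalent tropical curve, computed by choosing a 3-valent vertex as root, is unchanged (up to sign) when the root is moved across an internal edge to an adjacent 3-valent vertex. -/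
open Matrix

/-- Rooted binary trees with leaves labeled by pairs `(d, z) ∈ ℤ³ × ℤ³`. -/
inductive RootedBinaryTree : Type
  | leaf (d z : Fin 3 → ℤ) : RootedBinaryTree
  | node (s t : RootedBinaryTree) : RootedBinaryTree

/-- The total degree `D` of a tree: `D(leaf(d,z)) = d`, `D(node(s,t)) = D(s) + D(t)`. -/
def RootedBinaryTree.D : RootedBinaryTree → (Fin 3 → ℤ)
  | .leaf d _ => d
  | .node s t => s.D + t.D

/-- The rotational momentum: `ρ(leaf(d,z)) = d × z` and
`ρ(node(s,t)) = (ρ(s) × ρ(t)) × (D(s) + D(t))`. -/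
def RootedBinaryTree.rho : RootedBinaryTree → (Fin 3 → ℤ)
  | .leaf d z => d ⨯₃ z
  | .node s t => (s.rho ⨯₃ t.rho) ⨯₃ (s.D + t.D)

/-- For any four rooted binary trees `t₁ t₂ t₃ t₄` with
`D(t₁) + D(t₂) + D(t₃) + D(t₄) = 0`, one has
`det(ρ(t₁), ρ(t₂), ρ(node(t₃,t₄))) = det(ρ(t₃), ρ(t₄), ρ(node(t₁,t₂)))`:
the mixed h-product is unchanged when the root is moved across an internal edge. -/
theorem mixed_h_product_root_invariant (t₁ t₂ t₃ t₄ : RootedBinaryTree)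
    (hbal : t₁.D + t₂.D + t₃.D + t₄.D = 0) :
    (t₁.rho ⨯₃ t₂.rho) ⬝ᵥ (RootedBinaryTree.node t₃ t₄).rho =
      (t₃.rho ⨯₃ t₄.rho) ⬝ᵥ (RootedBinaryTree.node t₁ t₂).rho := by
  have h : t₃.D + t₄.D = -(t₁.D + t₂.D) := by
    have := hbal; funext i; have := congrFun this i
    simp only [Pi.add_apply, Pi.zero_apply, Pi.neg_apply] at *; omega
  show (t₁.rho ⨯₃ t₂.rho) ⬝ᵥ ((t₃.rho ⨯₃ t₄.rho) ⨯₃ (t₃.D + t₄.D)) =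
      (t₃.rho ⨯₃ t₄.rho) ⬝ᵥ ((t₁.rho ⨯₃ t₂.rho) ⨯₃ (t₁.D + t₂.D))
  rw [h]
  generalize t₁.rho ⨯₃ t₂.rho = u
  generalize t₃.rho ⨯₃ t₄.rho = v
  generalize t₁.D + t₂.D = w
  simp [crossProduct, dotProduct, Fin.sum_univ_three]
  ring
end

section
/- Let v, w ∈ ℤ³ be linearly independent over ℝ. Let K = ℤv + ℤw be the subgroup of ℤ³ generated by v and w, and let H = {x ∈ ℤ³ : x lies in the real span of v and w} be the saturation of K in ℤ³. Then the index [H : K] is finite and equals the greatest common divisor of the three coordinates of v × w. (This lattice-index computation is the core of the inductive step computing the order of the torsion of H₁(L⁺(e)) for the graph 3-manifold pieces: the torsion contributed at a 3-valent vertex equals the GCD of the coordinates of the cross product of the incoming rotational momenta.) -/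
set_option maxHeartbeats 1000000

open Matrix

lemma cross_cast {R S : Type*} [CommRing R] [CommRing S] (f : R →+* S) (v w : Fin 3 → R) :
    (fun i => f ((v ⨯₃ w) i)) = (fun i => f (v i)) ⨯₃ (fun i => f (w i)) := by
  funext i; fin_cases i <;> simp [cross_apply]

lemma key_id (v w x : Fin 3 → ℤ) :
    ((v ⨯₃ w) ⬝ᵥ (v ⨯₃ w)) • x
      = ((x ⬝ᵥ v) * (w ⬝ᵥ w) - (x ⬝ᵥ w) * (v ⬝ᵥ w)) • v
        + ((x ⬝ᵥ w) * (v ⬝ᵥ v) - (x ⬝ᵥ v) * (v ⬝ᵥ w)) • w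
        + ((v ⨯₃ w) ⬝ᵥ x) • (v ⨯₃ w) := by
  funext i; fin_cases i <;>
    simp [cross_apply, dotProduct, Fin.sum_univ_three] <;> ring

lemma gcd3_smul (u : ℤ) (d : Fin 3 → ℤ) :
    Int.gcd (u * d 0) (Int.gcd (u * d 1) (u * d 2)) =
      u.natAbs * Int.gcd (d 0) (Int.gcd (d 1) (d 2)) := by
  rw [Int.gcd_mul_left]
  unfold Int.gcd
  simp [Int.natAbs_mul, Int.natAbs_abs, Nat.gcd_mul_left]

lemma mem_span_pair_iff_dot_cross_eq_zero (vR wR : Fin 3 → ℝ)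
    (h : LinearIndependent ℝ ![vR, wR]) (y : Fin 3 → ℝ) :
    y ∈ Submodule.span ℝ {vR, wR} ↔ (vR ⨯₃ wR) ⬝ᵥ y = 0 := by
  have hcR : vR ⨯₃ wR ≠ 0 := crossProduct_ne_zero_iff_linearIndependent.mpr h
  let fR : (Fin 3 → ℝ) →ₗ[ℝ] ℝ :=
    { toFun := fun y => (vR ⨯₃ wR) ⬝ᵥ y
      map_add' := fun a b => by simp
      map_smul' := fun r a => by simp }
  suffices hs : Submodule.span ℝ {vR, wR} = LinearMap.ker fR by
    rw [hs]; exact LinearMap.mem_ker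
  have hle : Submodule.span ℝ {vR, wR} ≤ LinearMap.ker fR := by
    rw [Submodule.span_le]
    rintro y (rfl | rfl) <;>
      · rw [SetLike.mem_coe, LinearMap.mem_ker]
        show (_ ⨯₃ _) ⬝ᵥ _ = 0
        rw [dotProduct_comm]; simp
  have hm : (vR ⨯₃ wR) ⬝ᵥ (vR ⨯₃ wR) ≠ 0 := fun h0 => hcR (dotProduct_self_eq_zero.mp h0)
  have hrange : LinearMap.range fR = ⊤ := by
    rw [LinearMap.range_eq_top]
    intro r
    refine ⟨(r / ((vR ⨯₃ wR) ⬝ᵥ (vR ⨯₃ wR))) • (vR ⨯₃ wR), ?_⟩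
    show (vR ⨯₃ wR) ⬝ᵥ _ = r
    rw [dotProduct_smul, smul_eq_mul, div_mul_cancel₀ r hm]
  have hker : Module.finrank ℝ (LinearMap.ker fR) = 2 := by
    have h3 := LinearMap.finrank_range_add_finrank_ker fR
    rw [hrange] at h3
    simp only [finrank_top, Module.finrank_self] at h3
    have : Module.finrank ℝ (Fin 3 → ℝ) = 3 := by simp
    omega
  have hspan : Module.finrank ℝ (Submodule.span ℝ ({vR, wR} : Set (Fin 3 → ℝ))) = 2 := by
    have hrg : ({vR, wR} : Set (Fin 3 → ℝ)) = Set.range ![vR, wR] := by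
      ext y; simp [Fin.exists_fin_two, eq_comm, or_comm]
    rw [hrg, finrank_span_eq_card h]
    simp
  exact Submodule.eq_of_le_of_finrank_le hle (by rw [hker, hspan])

/-- For `v, w ∈ ℤ³` linearly independent over `ℝ`, the index of the subgroup
`K = ℤv + ℤw` inside its saturation
`H = {x ∈ ℤ³ : x lies in the real span of v and w}` is finite and equal to the
gcd of the three coordinates of `v × w`. -/
theorem saturation_index_eq_gcd_cross (v w : Fin 3 → ℤ)
    (h : LinearIndependent ℝ ![(fun i => (v i : ℝ)), (fun i => (w i : ℝ))]) :
    0 < Int.gcd ((v ⨯₃ w) 0) (Int.gcd ((v ⨯₃ w) 1) ((v ⨯₃ w) 2)) ∧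
    (AddSubgroup.closure {v, w}).relIndex
        (AddSubgroup.comap ((Int.castAddHom ℝ).compLeft (Fin 3))
          (Submodule.span ℝ
            {(fun i => (v i : ℝ)), (fun i => (w i : ℝ))}).toAddSubgroup) =
      Int.gcd ((v ⨯₃ w) 0) (Int.gcd ((v ⨯₃ w) 1) ((v ⨯₃ w) 2)) := by
  classical
  have hcastR : (fun i => (((v ⨯₃ w) i : ℤ) : ℝ))
      = (fun i => (v i : ℝ)) ⨯₃ (fun i => (w i : ℝ)) :=
    cross_cast (Int.castRingHom ℝ) v w
  -- the cross product is nonzero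
  have hcR_ne : (fun i => (v i : ℝ)) ⨯₃ (fun i => (w i : ℝ)) ≠ 0 :=
    crossProduct_ne_zero_iff_linearIndependent.mpr h
  have hc_ne : v ⨯₃ w ≠ 0 := by
    intro h0
    apply hcR_ne
    rw [← hcastR, h0]
    funext i; simp
  -- positivity of the gcd
  have hpos : 0 < Int.gcd ((v ⨯₃ w) 0) (Int.gcd ((v ⨯₃ w) 1) ((v ⨯₃ w) 2)) := by
    rcases Function.ne_iff.mp hc_ne with ⟨i, hi⟩
    apply Nat.pos_of_ne_zero
    intro h0
    obtain ⟨h1, h2⟩ := Int.gcd_eq_zero_iff.mp h0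
    rw [Int.natCast_eq_zero] at h2
    obtain ⟨h3, h4⟩ := Int.gcd_eq_zero_iff.mp h2
    fin_cases i <;> simp_all
  refine ⟨hpos, ?_⟩
  -- the ℤ-linear functional x ↦ (v ⨯₃ w) ⬝ᵥ x
  set c : Fin 3 → ℤ := v ⨯₃ w with hc_def
  let dotc : (Fin 3 → ℤ) →ₗ[ℤ] ℤ :=
    { toFun := fun x => c ⬝ᵥ x
      map_add' := fun a b => by simp
      map_smul' := fun r a => by simp [dotProduct, Fin.sum_univ_three]; ring }
  set Hm : Submodule ℤ (Fin 3 → ℤ) := LinearMap.ker dotc with hHm_def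
  have hmemHm : ∀ x : Fin 3 → ℤ, x ∈ Hm ↔ c ⬝ᵥ x = 0 := fun x => Iff.rfl
  -- identify the saturation subgroup with Hm
  have hdotcast : ∀ x : Fin 3 → ℤ,
      ((fun i => (v i : ℝ)) ⨯₃ (fun i => (w i : ℝ))) ⬝ᵥ (fun i => ((x i : ℤ) : ℝ))
        = ((c ⬝ᵥ x : ℤ) : ℝ) := by
    intro x
    rw [← hcastR]
    push_cast [dotProduct, Fin.sum_univ_three]
    ring
  have hH_eq : (AddSubgroup.comap ((Int.castAddHom ℝ).compLeft (Fin 3))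
          (Submodule.span ℝ
            {(fun i => (v i : ℝ)), (fun i => (w i : ℝ))}).toAddSubgroup)
        = Hm.toAddSubgroup := by
    ext x
    rw [AddSubgroup.mem_comap]
    have : ((Int.castAddHom ℝ).compLeft (Fin 3)) x = (fun i => ((x i : ℤ) : ℝ)) := rfl
    rw [this]
    rw [Submodule.mem_toAddSubgroup, Submodule.mem_toAddSubgroup,
      mem_span_pair_iff_dot_cross_eq_zero _ _ h, hdotcast x, Int.cast_eq_zero]
    exact (hmemHm x).symm
  -- v and w lie in Hm
  have hvH : v ∈ Hm := by
    rw [hmemHm, hc_def, dotProduct_comm]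
    exact dot_self_cross v w
  have hwH : w ∈ Hm := by
    rw [hmemHm, hc_def, dotProduct_comm]
    exact dot_cross_self v w
  set K' : Submodule ℤ (Fin 3 → ℤ) := Submodule.span ℤ {v, w} with hK'_def
  have hvK : v ∈ K' := Submodule.subset_span (Set.mem_insert _ _)
  have hwK : w ∈ K' := Submodule.subset_span (Set.mem_insert_of_mem _ rfl)
  have hKH : K' ≤ Hm := by
    rw [hK'_def, Submodule.span_le]
    rintro y (rfl | rfl)
    · exact hvH
    · exact hwH
  -- linear independence of v, w over ℤ
  have li_vw : LinearIndependent ℤ ![v, w] := by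
    rw [LinearIndependent.pair_iff]
    intro s t hst
    have hR : (s : ℝ) • (fun i => (v i : ℝ)) + (t : ℝ) • (fun i => (w i : ℝ)) = 0 := by
      funext i
      have h' := congrFun hst i
      simp only [Pi.add_apply, Pi.smul_apply, smul_eq_mul, Pi.zero_apply] at h' ⊢
      exact_mod_cast h'
    obtain ⟨hs, ht⟩ := LinearIndependent.pair_iff.mp h _ _ hR
    exact ⟨by exact_mod_cast hs, by exact_mod_cast ht⟩
  have hrg2 : ({v, w} : Set (Fin 3 → ℤ)) = Set.range ![v, w] := by
    ext y; simp [Fin.exists_fin_two, eq_comm, or_comm]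
  have hfrK : Module.finrank ℤ K' = 2 := by
    rw [hK'_def, hrg2, finrank_span_eq_card li_vw]
    simp
  -- rank of Hm is at most 2
  have hmm : c ⬝ᵥ c ≠ 0 := fun h0 => hc_ne (dotProduct_self_eq_zero.mp h0)
  have hsm : ∀ x ∈ Hm, (c ⬝ᵥ c) • x ∈ K' := by
    intro x hx
    have hkey := key_id v w x
    rw [hmemHm] at hx
    rw [← hc_def, hx, zero_smul, add_zero] at hkey
    rw [hkey]
    exact Submodule.add_mem _ (Submodule.smul_mem _ _ hvK) (Submodule.smul_mem _ _ hwK)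
  haveI hfinK : Module.Finite ℤ K' := by
    rw [hK'_def]
    exact Module.Finite.span_of_finite ℤ ((Set.finite_singleton w).insert v)
  let Φ : Hm →ₗ[ℤ] K' := LinearMap.codRestrict K' ((c ⬝ᵥ c) • Hm.subtype) (fun x => hsm x x.2)
  have hΦinj : Function.Injective Φ := by
    intro x y hxy
    have h1 : (c ⬝ᵥ c) • (x : Fin 3 → ℤ) = (c ⬝ᵥ c) • (y : Fin 3 → ℤ) := by
      have h2 := congrArg (Subtype.val) hxy
      exact h2
    exact Subtype.ext (smul_right_injective _ hmm h1)
  have hfrH_le : Module.finrank ℤ Hm ≤ 2 :=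
    hfrK ▸ LinearMap.finrank_le_finrank_of_injective hΦinj
  -- Smith normal form
  obtain ⟨o, n, snf⟩ := Submodule.smithNormalFormOfLE (Pi.basisFun ℤ (Fin 3)) K' Hm hKH
  set N' : Submodule ℤ Hm := K'.comap Hm.subtype with hN'_def
  have hn2 : n = 2 := by
    have e := Submodule.comapSubtypeEquivOfLe hKH
    have h1 : Module.finrank ℤ N' = Module.finrank ℤ K' := e.finrank_eq
    have h2 : Module.finrank ℤ N' = n := by
      rw [Module.finrank_eq_card_basis snf.bN]; simp
    omega
  have ho2 : o = 2 := by
    have h2 : Module.finrank ℤ Hm = o := by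
      rw [Module.finrank_eq_card_basis snf.bM]; simp
    have h3 : n ≤ o := by simpa using Fintype.card_le_of_embedding snf.f
    omega
  subst hn2 ho2
  -- index computation
  have hidx : N'.toAddSubgroup.index = (snf.a 0).natAbs * (snf.a 1).natAbs := by
    rw [snf.toAddSubgroup_index_eq_pow_mul_prod]
    simp [Ideal.span_singleton_toAddSubgroup_eq_zmultiples, Int.index_zmultiples,
      Fin.prod_univ_two]
  rw [hH_eq, ← Submodule.span_int_eq_addSubgroupClosure, ← hK'_def]
  have hrel : K'.toAddSubgroup.relIndex Hm.toAddSubgroup = N'.toAddSubgroup.index := rfl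
  rw [hrel, hidx]
  -- the two distinguished basis vectors of Hm
  set E : Fin 2 → (Fin 3 → ℤ) := fun i => ((snf.bM (snf.f i) : Hm) : Fin 3 → ℤ) with hE_def
  have hEH : ∀ i, c ⬝ᵥ E i = 0 := fun i => (hmemHm _).mp (snf.bM (snf.f i)).2
  let π : N' →ₗ[ℤ] (Fin 3 → ℤ) := Hm.subtype ∘ₗ N'.subtype
  have hπ : ∀ i, π (snf.bN i) = snf.a i • E i := by
    intro i
    show ((snf.bN i : Hm) : Fin 3 → ℤ) = _
    rw [snf.snf i]
    rfl
  have hvN' : (⟨v, hvH⟩ : Hm) ∈ N' := by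
    simpa [hN'_def, Submodule.mem_comap] using hvK
  have hwN' : (⟨w, hwH⟩ : Hm) ∈ N' := by
    simpa [hN'_def, Submodule.mem_comap] using hwK
  set vN : N' := ⟨⟨v, hvH⟩, hvN'⟩ with hvN_def
  set wN : N' := ⟨⟨w, hwH⟩, hwN'⟩ with hwN_def
  set r : Fin 2 → ℤ := fun j => snf.bN.repr vN j with hr_def
  set s : Fin 2 → ℤ := fun j => snf.bN.repr wN j with hs_def
  have hexp : ∀ (z : N') (rr : Fin 2 → ℤ), (rr = fun j => snf.bN.repr z j) →
      ∀ jj : Fin 3, π z jj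
        = rr 0 * snf.a 0 * E 0 jj + rr 1 * snf.a 1 * E 1 jj := by
    rintro z rr rfl jj
    have h1 := snf.bN.sum_repr z
    have h2 := congrArg π h1
    rw [map_sum] at h2
    simp only [_root_.map_smul, hπ] at h2
    rw [Fin.sum_univ_two] at h2
    have h4 := congrFun h2 jj
    simp only [Pi.add_apply, Pi.smul_apply, smul_eq_mul] at h4
    linear_combination -h4
  have hv_exp : ∀ jj : Fin 3, v jj = r 0 * snf.a 0 * E 0 jj + r 1 * snf.a 1 * E 1 jj :=
    fun jj => hexp vN r hr_def jj
  have hw_exp : ∀ jj : Fin 3, w jj = s 0 * snf.a 0 * E 0 jj + s 1 * snf.a 1 * E 1 jj :=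
    fun jj => hexp wN s hs_def jj
  -- the basis vectors of N' expressed in terms of v and w
  have hB : ∀ i : Fin 2, ∃ b1 b2 : ℤ, b1 • v + b2 • w = snf.a i • E i := by
    intro i
    have hmem : snf.a i • E i ∈ K' := by
      rw [← hπ i]
      have h5 := (snf.bN i).2
      exact Submodule.mem_comap.mp h5
    rw [hK'_def] at hmem
    exact Submodule.mem_span_pair.mp hmem
  obtain ⟨b00, b01, hB0⟩ := hB 0
  obtain ⟨b10, b11, hB1⟩ := hB 1
  have hB0' : ∀ jj, b00 * v jj + b01 * w jj = snf.a 0 * E 0 jj := by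
    intro jj; have := congrFun hB0 jj; simpa using this
  have hB1' : ∀ jj, b10 * v jj + b11 * w jj = snf.a 1 * E 1 jj := by
    intro jj; have := congrFun hB1 jj; simpa using this
  have hcoef : ∀ sc tc : ℤ, sc • v + tc • w = 0 → sc = 0 ∧ tc = 0 :=
    fun sc tc => LinearIndependent.pair_iff.mp li_vw sc tc
  have he1 : (r 0 * b00 + r 1 * b10 - 1) • v + (r 0 * b01 + r 1 * b11) • w = 0 := by
    funext jj
    simp only [Pi.add_apply, Pi.smul_apply, smul_eq_mul, Pi.zero_apply]
    linear_combination (-1 : ℤ) * hv_exp jj + r 0 * hB0' jj + r 1 * hB1' jj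
  have he2 : (s 0 * b00 + s 1 * b10) • v + (s 0 * b01 + s 1 * b11 - 1) • w = 0 := by
    funext jj
    simp only [Pi.add_apply, Pi.smul_apply, smul_eq_mul, Pi.zero_apply]
    linear_combination (-1 : ℤ) * hw_exp jj + s 0 * hB0' jj + s 1 * hB1' jj
  obtain ⟨epv1, epv2⟩ := hcoef _ _ he1
  obtain ⟨epw1, epw2⟩ := hcoef _ _ he2
  set detA : ℤ := r 0 * s 1 - r 1 * s 0 with hdetA_def
  have hdet : detA * (b00 * b11 - b01 * b10) = 1 := by
    rw [hdetA_def]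
    linear_combination (s 0 * b01 + s 1 * b11) * epv1 + epw2 - (s 0 * b00 + s 1 * b10) * epv2
  have hdet1 : detA.natAbs = 1 := by
    have h1 : detA.natAbs * (b00 * b11 - b01 * b10).natAbs = 1 := by
      rw [← Int.natAbs_mul, hdet]; rfl
    exact Nat.eq_one_of_mul_eq_one_right h1
  -- the cross product in terms of E
  have hcE : ∀ jj, c jj = detA * (snf.a 0 * snf.a 1) * (E 0 ⨯₃ E 1) jj := by
    intro jj
    rw [hc_def]
    fin_cases jj <;>
      · simp only [cross_apply]
        norm_num
        rw [hv_exp, hv_exp, hw_exp, hw_exp]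
        ring
  -- the gcd of the cross product of the basis of Hm is 1
  have hgcd1 : Int.gcd ((E 0 ⨯₃ E 1) 0) (Int.gcd ((E 0 ⨯₃ E 1) 1) ((E 0 ⨯₃ E 1) 2)) = 1 := by
    rw [Nat.eq_one_iff_not_exists_prime_dvd]
    intro p hp hdvd
    haveI : Fact p.Prime := ⟨hp⟩
    set d : Fin 3 → ℤ := E 0 ⨯₃ E 1 with hd_def
    have hd0 : (p : ℤ) ∣ d 0 := (Int.natCast_dvd_natCast.mpr hdvd).trans (Int.gcd_dvd_left _ _)
    have hd12 : (p : ℕ) ∣ Int.gcd (d 1) (d 2) := by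
      have h6 := (Int.natCast_dvd_natCast.mpr hdvd).trans (Int.gcd_dvd_right _ _)
      exact_mod_cast h6
    have hd1 : (p : ℤ) ∣ d 1 := (Int.natCast_dvd_natCast.mpr hd12).trans (Int.gcd_dvd_left _ _)
    have hd2 : (p : ℤ) ∣ d 2 := (Int.natCast_dvd_natCast.mpr hd12).trans (Int.gcd_dvd_right _ _)
    have hcastp : (fun i => ((d i : ℤ) : ZMod p))
        = (fun i => ((E 0 i : ℤ) : ZMod p)) ⨯₃ (fun i => ((E 1 i : ℤ) : ZMod p)) :=
      cross_cast (Int.castRingHom (ZMod p)) (E 0) (E 1)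
    have hzero : (fun i => ((E 0 i : ℤ) : ZMod p)) ⨯₃ (fun i => ((E 1 i : ℤ) : ZMod p)) = 0 := by
      rw [← hcastp]
      funext i
      rw [Pi.zero_apply, ZMod.intCast_zmod_eq_zero_iff_dvd]
      fin_cases i <;> assumption
    have hnli : ¬ LinearIndependent (ZMod p)
        ![fun i => ((E 0 i : ℤ) : ZMod p), fun i => ((E 1 i : ℤ) : ZMod p)] := by
      intro hli
      exact crossProduct_ne_zero_iff_linearIndependent.mpr hli hzero
    rw [LinearIndependent.pair_iff] at hnli
    push_neg at hnli
    obtain ⟨sp, tp, hst, hne⟩ := hnli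
    obtain ⟨S, rfl⟩ := ZMod.intCast_surjective sp
    obtain ⟨T, rfl⟩ := ZMod.intCast_surjective tp
    have hcoord : ∀ jj : Fin 3, (p : ℤ) ∣ S * E 0 jj + T * E 1 jj := by
      intro jj
      rw [← ZMod.intCast_zmod_eq_zero_iff_dvd]
      push_cast
      have h7 := congrFun hst jj
      simpa using h7
    set x : Fin 3 → ℤ := fun jj => (S * E 0 jj + T * E 1 jj) / p with hx_def
    have hpx : ∀ jj, (p : ℤ) * x jj = S * E 0 jj + T * E 1 jj :=
      fun jj => Int.mul_ediv_cancel' (hcoord jj)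
    have hxH : x ∈ Hm := by
      rw [hmemHm]
      have hE0 := hEH 0; have hE1 := hEH 1
      have hpd : (p : ℤ) * (c ⬝ᵥ x) = 0 := by
        simp only [dotProduct, Fin.sum_univ_three] at hE0 hE1 ⊢
        linear_combination c 0 * hpx 0 + c 1 * hpx 1 + c 2 * hpx 2 + S * hE0 + T * hE1
      rcases mul_eq_zero.mp hpd with h' | h'
      · exact absurd h' (by exact_mod_cast hp.ne_zero)
      · exact h'
    set mcoef : Fin 2 → ℤ := fun k => snf.bM.repr ⟨x, hxH⟩ k with hmc_def
    have hfbij : Function.Bijective snf.f := Finite.injective_iff_bijective.mp snf.f.injective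
    have hx_exp : ∀ jj, x jj = mcoef (snf.f 0) * E 0 jj + mcoef (snf.f 1) * E 1 jj := by
      intro jj
      have h1 := snf.bM.sum_repr ⟨x, hxH⟩
      have h2 := congrArg Hm.subtype h1
      rw [map_sum] at h2
      simp only [_root_.map_smul] at h2
      rw [← Equiv.sum_comp (Equiv.ofBijective snf.f hfbij)
        (fun k => snf.bM.repr ⟨x, hxH⟩ k • Hm.subtype (snf.bM k))] at h2
      simp only [Equiv.ofBijective_apply, Fin.sum_univ_two] at h2
      have h3 := congrFun h2 jj
      simp only [Pi.add_apply, Pi.smul_apply, smul_eq_mul] at h3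
      exact h3.symm
    have liE : LinearIndependent ℤ E := by
      have l1 := snf.bM.linearIndependent
      have l2 := l1.map' Hm.subtype (Submodule.ker_subtype Hm)
      exact l2.comp snf.f snf.f.injective
    have hzero2 : ∑ i : Fin 2,
        (![S - p * mcoef (snf.f 0), T - p * mcoef (snf.f 1)]) i • E i = 0 := by
      rw [Fin.sum_univ_two]
      funext jj
      simp only [Matrix.cons_val_zero, Matrix.cons_val_one, Matrix.head_cons, Pi.add_apply,
        Pi.smul_apply, smul_eq_mul, Pi.zero_apply]
      linear_combination (-1 : ℤ) * hpx jj + (p : ℤ) * hx_exp jj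
    have hcancel := Fintype.linearIndependent_iff.mp liE _ hzero2
    have hS := hcancel 0
    have hT := hcancel 1
    simp only [Matrix.cons_val_zero, Matrix.cons_val_one, Matrix.head_cons, sub_eq_zero] at hS hT
    have hS0 : ((S : ℤ) : ZMod p) = 0 := by
      rw [ZMod.intCast_zmod_eq_zero_iff_dvd]
      exact ⟨mcoef (snf.f 0), hS⟩
    have hT0 : ((T : ℤ) : ZMod p) = 0 := by
      rw [ZMod.intCast_zmod_eq_zero_iff_dvd]
      exact ⟨mcoef (snf.f 1), hT⟩
    exact hne hS0 hT0
  -- final computation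
  rw [hcE 0, hcE 1, hcE 2, gcd3_smul, hgcd1, mul_one, Int.natAbs_mul, hdet1, one_mul,
    Int.natAbs_mul]
end
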